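/- If μ > 0, then for every x ≥ 0 the function t ↦ H(t, x) is monotone increasing on [0, T), where H(t, x) = (2μ²(T−t) − 2μx + 3)·Φ((x − μ(T−t))/√(T−t)) − 2μ√(T−t)·φ((x − μ(T−t))/√(T−t)) − e^{2μx}·Φ((−x − μ(T−t))/√(T−t)) − 2(1 + μ²(T−t)). -/

import Mathlib

open Set MeasureTheory

/-- Standard normal CDF. -/
noncomputable def stdNormalCDF (x : ℝ) : ℝ :=
  ∫ t in Iic x, (Real.sqrt (2 * Real.pi))⁻¹ * Real.exp (-(t ^ 2) / 2)

/-- Standard normal density. -/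
noncomputable def stdNormalPDF (x : ℝ) : ℝ :=
  (Real.sqrt (2 * Real.pi))⁻¹ * Real.exp (-(x ^ 2) / 2)

lemma gauss_integrable :
    Integrable (fun t : ℝ => (Real.sqrt (2 * Real.pi))⁻¹ * Real.exp (-(t ^ 2) / 2)) := by
  have h : ∀ t : ℝ, -(t ^ 2) / 2 = -(1/2 : ℝ) * t ^ 2 := fun t => by ring
  simp_rw [h]
  exact (integrable_exp_neg_mul_sq (by norm_num)).const_mul _

lemma gauss_continuous :
    Continuous (fun t : ℝ => (Real.sqrt (2 * Real.pi))⁻¹ * Real.exp (-(t ^ 2) / 2)) := by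
  fun_prop

lemma stdNormalCDF_hasDerivAt (x : ℝ) : HasDerivAt stdNormalCDF (stdNormalPDF x) x := by
  have key : ∀ y : ℝ, stdNormalCDF y =
      stdNormalCDF 0 + ∫ t in (0:ℝ)..y, (Real.sqrt (2 * Real.pi))⁻¹ * Real.exp (-(t ^ 2) / 2) := by
    intro y
    have := intervalIntegral.integral_Iic_sub_Iic (μ := volume) gauss_integrable.integrableOn
      gauss_integrable.integrableOn (a := (0:ℝ)) (b := y)
    rw [stdNormalCDF, stdNormalCDF]
    linarith [this]
  have h : HasDerivAt (fun y : ℝ => stdNormalCDF 0 +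
      ∫ t in (0:ℝ)..y, (Real.sqrt (2 * Real.pi))⁻¹ * Real.exp (-(t ^ 2) / 2))
      (stdNormalPDF x) x := by
    refine HasDerivAt.const_add _ ?_
    exact intervalIntegral.integral_hasDerivAt_right
      gauss_integrable.intervalIntegrable
      (gauss_continuous.stronglyMeasurable.stronglyMeasurableAtFilter)
      gauss_continuous.continuousAt
  exact h.congr_of_eventuallyEq (Filter.Eventually.of_forall key)

lemma stdNormalPDF_nonneg (x : ℝ) : 0 ≤ stdNormalPDF x := by
  unfold stdNormalPDF; positivity

lemma stdNormalCDF_le_one (x : ℝ) : stdNormalCDF x ≤ 1 := by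
  have h1 : (∫ t : ℝ, (Real.sqrt (2 * Real.pi))⁻¹ * Real.exp (-(t ^ 2) / 2)) = 1 := by
    have h : ∀ t : ℝ, -(t ^ 2) / 2 = -(1/2 : ℝ) * t ^ 2 := fun t => by ring
    simp_rw [h, integral_const_mul, integral_gaussian]
    rw [show Real.pi / (1/2) = 2 * Real.pi by ring]
    rw [inv_mul_cancel₀ (by positivity)]
  calc stdNormalCDF x ≤ ∫ t : ℝ, (Real.sqrt (2 * Real.pi))⁻¹ * Real.exp (-(t ^ 2) / 2) :=
        setIntegral_le_integral gauss_integrable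
          (Filter.Eventually.of_forall fun t => by positivity)
    _ = 1 := h1


/-- The function `H` from (4.2). -/
noncomputable def Hfun (μ T t x : ℝ) : ℝ :=
  (2 * μ ^ 2 * (T - t) - 2 * μ * x + 3) *
      stdNormalCDF ((x - μ * (T - t)) / Real.sqrt (T - t))
    - 2 * μ * Real.sqrt (T - t) * stdNormalPDF ((x - μ * (T - t)) / Real.sqrt (T - t))
    - Real.exp (2 * μ * x) * stdNormalCDF ((-x - μ * (T - t)) / Real.sqrt (T - t))
    - 2 * (1 + μ ^ 2 * (T - t))

lemma stdNormalPDF_hasDerivAt (u : ℝ) : HasDerivAt stdNormalPDF (-u * stdNormalPDF u) u := by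
  have h : HasDerivAt (fun y : ℝ => -(y ^ 2) / 2) (-u) u := by
    have := (hasDerivAt_pow 2 u).neg.div_const 2
    refine this.congr_deriv ?_
    simp; ring
  have h2 := (h.exp).const_mul ((Real.sqrt (2 * Real.pi))⁻¹)
  unfold stdNormalPDF
  refine h2.congr_deriv ?_
  ring

lemma Hfun_hasDerivAt (μ T x : ℝ) (t : ℝ) (ht : t < T) :
    HasDerivAt (fun t => Hfun μ T t x)
      (2 * μ ^ 2 * (1 - stdNormalCDF ((x - μ * (T - t)) / Real.sqrt (T - t)))
        + 2 * (x + μ * (T - t)) * stdNormalPDF ((x - μ * (T - t)) / Real.sqrt (T - t))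
          / (Real.sqrt (T - t)) ^ 3) t := by
  have hτ : 0 < T - t := by linarith
  set s := Real.sqrt (T - t) with hsdef
  have hs : 0 < s := Real.sqrt_pos.mpr hτ
  have hs2 : s ^ 2 = T - t := Real.sq_sqrt hτ.le
  have hTt : HasDerivAt (fun u : ℝ => T - u) (-1) t := by
    simpa using (hasDerivAt_id t).const_sub T
  have hsq : HasDerivAt (fun u : ℝ => Real.sqrt (T - u)) (-(1 / (2 * s))) t := by
    have h := (Real.hasDerivAt_sqrt hτ.ne').comp t hTt
    refine h.congr_deriv ?_
    field_simp
    rfl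
  have hnum1 : HasDerivAt (fun u : ℝ => x - μ * (T - u)) μ t := by
    have := (hTt.const_mul μ).const_sub x
    refine this.congr_deriv ?_; ring
  have hnum2 : HasDerivAt (fun u : ℝ => -x - μ * (T - u)) μ t := by
    have := (hTt.const_mul μ).const_sub (-x)
    refine this.congr_deriv ?_; ring
  have hd := hnum1.div hsq hs.ne'
  have hd' := hnum2.div hsq hs.ne'
  have hA : HasDerivAt (fun u : ℝ => 2 * μ ^ 2 * (T - u) - 2 * μ * x + 3) (2 * μ ^ 2 * -1) t :=
    ((hTt.const_mul (2 * μ ^ 2)).sub_const (2 * μ * x)).add_const 3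
  have hΦ1 := (stdNormalCDF_hasDerivAt ((x - μ * (T - t)) / s)).comp t hd
  have hΦ2 := (stdNormalCDF_hasDerivAt ((-x - μ * (T - t)) / s)).comp t hd'
  have hp1 := (stdNormalPDF_hasDerivAt ((x - μ * (T - t)) / s)).comp t hd
  have hB : HasDerivAt (fun u : ℝ => 2 * μ * Real.sqrt (T - u)) (2 * μ * -(1 / (2 * s))) t :=
    hsq.const_mul (2 * μ)
  have hC := hΦ2.const_mul (Real.exp (2 * μ * x))
  have hD : HasDerivAt (fun u : ℝ => 2 * (1 + μ ^ 2 * (T - u))) (2 * (μ ^ 2 * -1)) t :=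
    ((hTt.const_mul (μ ^ 2)).const_add 1).const_mul 2
  have full := (((hA.mul hΦ1).sub (hB.mul hp1)).sub hC).sub hD
  have hkey : Real.exp (2 * μ * x) * stdNormalPDF ((-x - μ * (T - t)) / s)
      = stdNormalPDF ((x - μ * (T - t)) / s) := by
    unfold stdNormalPDF
    rw [mul_left_comm, ← Real.exp_add]
    congr 2
    rw [← hs2]
    field_simp
    ring
  unfold Hfun
  refine full.congr_deriv ?_
  have e1 : Real.exp (2 * μ * x) *
      (stdNormalPDF ((-x - μ * (T - t)) / s) *
        ((μ * s - (-x - μ * (T - t)) * -(1 / (2 * s))) / s ^ 2))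
      = stdNormalPDF ((x - μ * (T - t)) / s) *
        ((μ * s - (-x - μ * (T - t)) * -(1 / (2 * s))) / s ^ 2) := by
    rw [← mul_assoc, hkey]
  simp only [← hsdef, Function.comp_apply, Pi.div_apply]
  rw [e1]
  set C := stdNormalCDF ((x - μ * (T - t)) / s) with hC1
  set P := stdNormalPDF ((x - μ * (T - t)) / s) with hP1
  rw [← hs2]
  field_simp
  ring


/-- if `μ > 0` then `t ↦ H(t, x)` is monotone increasing on `[0, T)`
for every `x ≥ 0`. -/
theorem Hfun_monotone_in_time (μ T : ℝ) (hμ : 0 < μ) (hT : 0 < T) (x : ℝ) (hx : 0 ≤ x) :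
    MonotoneOn (fun t => Hfun μ T t x) (Ico 0 T) := by
  apply monotoneOn_of_deriv_nonneg (convex_Ico 0 T)
  · intro t ht
    exact (Hfun_hasDerivAt μ T x t ht.2).continuousAt.continuousWithinAt
  · rw [interior_Ico]
    intro t ht
    exact (Hfun_hasDerivAt μ T x t ht.2).differentiableAt.differentiableWithinAt
  · rw [interior_Ico]
    intro t ht
    rw [(Hfun_hasDerivAt μ T x t ht.2).deriv]
    have hτ : 0 < T - t := by linarith [ht.2]
    have h1 : 0 < Real.sqrt (T - t) := Real.sqrt_pos.mpr hτ
    have h2 := stdNormalCDF_le_one ((x - μ * (T - t)) / Real.sqrt (T - t))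
    have h3 := stdNormalPDF_nonneg ((x - μ * (T - t)) / Real.sqrt (T - t))
    apply add_nonneg
    · nlinarith
    · apply div_nonneg _ (by positivity)
      have h4 : 0 ≤ x + μ * (T - t) := by nlinarith
      nlinarith [mul_nonneg h4 h3]
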